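/- Let g: ℝ^p → ℝ be concave and twice continuously differentiable, let A ⊆ {1,…,p}, a > 2, λ > 0. Let β̂ satisfy β̂ᵢ = 0 for i ∉ A, ∇g(β̂)ᵢ = 0 for i ∈ A, |β̂ᵢ| > aλ for all i ∈ A, and |∇g(β̂)ᵢ| ≤ λ for all i ∉ A. Then β̂ is a local maximizer of β ↦ g(β) - Σᵢ P_λ(|βᵢ|), where P_λ is the SCAD penalty. -/

import Mathlib

open Finset

/-- The SCAD penalty derivative. -/
noncomputable def scadDeriv (lam a t : ℝ) : ℝ :=
  if t ≤ lam then lam else max (a * lam - t) 0 / (a - 1)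

/-- The SCAD penalty `P_λ(t) = ∫₀ᵗ P'_λ(s) ds`. -/
noncomputable def scadPenalty (lam a t : ℝ) : ℝ := ∫ s in (0:ℝ)..t, scadDeriv lam a s

lemma scad_cont {lam a : ℝ} (ha : 2 < a) (hlam : 0 < lam) :
    Continuous (scadDeriv lam a) := by
  have h1 : a - 1 ≠ 0 := by nlinarith
  apply Continuous.if_le continuous_const
    (by continuity) continuous_id continuous_const
  intro x hx
  simp only [id] at hx
  subst hx
  rw [max_eq_left (by nlinarith)]
  field_simp

lemma scad_linear {lam a t : ℝ} (h0 : 0 ≤ t) (ht : t ≤ lam) :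
    scadPenalty lam a t = lam * t := by
  unfold scadPenalty
  rw [intervalIntegral.integral_congr (g := fun _ => lam)]
  · simp [mul_comm]
  · intro s hs
    rw [Set.uIcc_of_le h0] at hs
    exact if_pos (hs.2.trans ht)

lemma scad_const {lam a t : ℝ} (ha : 2 < a) (hlam : 0 < lam) (ht : a * lam ≤ t) :
    scadPenalty lam a t = scadPenalty lam a (a * lam) := by
  have hc := scad_cont ha hlam
  have hint : ∀ u v : ℝ, IntervalIntegrable (scadDeriv lam a) MeasureTheory.volume u v :=
    fun u v => hc.intervalIntegrable u v
  have hsplit := intervalIntegral.integral_add_adjacent_intervals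
    (hint 0 (a * lam)) (hint (a * lam) t)
  have hzero : (∫ s in (a*lam)..t, scadDeriv lam a s) = 0 := by
    rw [intervalIntegral.integral_congr (g := fun _ => (0:ℝ))]
    · simp
    · intro s hs
      rw [Set.uIcc_of_le ht] at hs
      have h1 : lam < s := by nlinarith [hs.1]
      rw [scadDeriv]
      rw [if_neg (not_le.mpr h1), max_eq_right (by nlinarith [hs.1]), zero_div]
  unfold scadPenalty
  rw [← hsplit, hzero, add_zero]

lemma concave_tangent {p : ℕ} {g : (Fin p → ℝ) → ℝ}
    (hconc : ConcaveOn ℝ Set.univ g) {x : Fin p → ℝ}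
    {L : (Fin p → ℝ) →L[ℝ] ℝ} (hL : HasFDerivAt g L x) (y : Fin p → ℝ) :
    g y ≤ g x + L (y - x) := by
  set φ : ℝ → ℝ := fun t => g (x + t • (y - x)) with hφ
  have hφeq : φ = g ∘ (AffineMap.lineMap x y : ℝ →ᵃ[ℝ] (Fin p → ℝ)) := by
    funext t
    simp [hφ, AffineMap.lineMap_apply, add_comm]
  have hφconc : ConcaveOn ℝ Set.univ φ := by
    have haff := hconc.comp_affineMap (AffineMap.lineMap x y : ℝ →ᵃ[ℝ] (Fin p → ℝ))
    rw [hφeq]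
    simpa using haff
  have hinner : HasDerivAt (fun t : ℝ => x + t • (y - x)) (y - x) 0 := by
    simpa using ((hasDerivAt_id (0:ℝ)).smul_const (y - x)).const_add x
  have hd : HasDerivAt φ (L (y - x)) 0 := by
    have := HasFDerivAt.comp_hasDerivAt (0:ℝ)
      (show HasFDerivAt g L ((fun t : ℝ => x + t • (y - x)) 0) by simpa using hL) hinner
    exact this
  have hsl := hφconc.slope_le_of_hasDerivAt (Set.mem_univ 0) (Set.mem_univ 1) one_pos hd
  have hs : slope φ 0 1 = g y - g x := by
    simp [slope_def_field, hφ]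
  rw [hs] at hsl
  linarith

/-- if `g` is concave and `C²`, `β̂` vanishes off `A`, has gradient zero
and entries of magnitude `> aλ` on `A`, and gradient bounded by `λ` off `A`, then
`β̂` is a local maximizer of the SCAD-penalized objective `β ↦ g(β) - Σᵢ P_λ(|βᵢ|)`. -/
theorem oracle_local_maximizer_scad
    (p : ℕ) (g : (Fin p → ℝ) → ℝ)
    (g' : (Fin p → ℝ) → ((Fin p → ℝ) →L[ℝ] ℝ))
    (hsmooth : ContDiff ℝ 2 g)
    (hconc : ConcaveOn ℝ Set.univ g)
    (hderiv : ∀ β, HasFDerivAt g (g' β) β)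
    (A : Finset (Fin p)) (a lam : ℝ) (ha : 2 < a) (hlam : 0 < lam)
    (βhat : Fin p → ℝ)
    (hzero : ∀ i ∉ A, βhat i = 0)
    (hgradA : ∀ i ∈ A, g' βhat (Pi.single i 1) = 0)
    (hbig : ∀ i ∈ A, a * lam < |βhat i|)
    (hgradAc : ∀ i ∉ A, |g' βhat (Pi.single i 1)| ≤ lam) :
    ∃ ε > 0, ∀ β : Fin p → ℝ, ‖β - βhat‖ < ε →
      g β - ∑ i, scadPenalty lam a |β i| ≤ g βhat - ∑ i, scadPenalty lam a |βhat i| := by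
  classical
  set ε : ℝ := if h : A.Nonempty then min lam (A.inf' h fun i => |βhat i| - a * lam) else lam
    with hε
  have hεpos : 0 < ε := by
    rw [hε]
    by_cases h : A.Nonempty
    · rw [dif_pos h]
      refine lt_min hlam ?_
      rw [Finset.lt_inf'_iff]
      intro i hi; linarith [hbig i hi]
    · rw [dif_neg h]; exact hlam
  have hεlam : ε ≤ lam := by
    rw [hε]
    by_cases h : A.Nonempty
    · rw [dif_pos h]; exact min_le_left _ _
    · rw [dif_neg h]
  have hεA : ∀ i ∈ A, ε ≤ |βhat i| - a * lam := by
    intro i hi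
    rw [hε, dif_pos ⟨i, hi⟩]
    exact le_trans (min_le_right _ _) (Finset.inf'_le _ hi)
  refine ⟨ε, hεpos, fun β hβ => ?_⟩
  have habs : ∀ i, |β i - βhat i| < ε := by
    intro i
    calc |β i - βhat i| = ‖(β - βhat) i‖ := by simp [Real.norm_eq_abs]
      _ ≤ ‖β - βhat‖ := norm_le_pi_norm _ i
      _ < ε := hβ
  have habsAc : ∀ i ∉ A, |β i| < ε := by
    intro i hi
    have := habs i
    rwa [hzero i hi, sub_zero] at this
  have hbigβ : ∀ i ∈ A, a * lam ≤ |β i| := by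
    intro i hi
    have h1 := habs i
    have h2 := hεA i hi
    have h3 : |βhat i| - |β i| ≤ |β i - βhat i| := by
      rw [abs_sub_comm]; exact abs_sub_abs_le_abs_sub _ _
    linarith
  have htan := concave_tangent hconc (hderiv βhat) β
  have hexp : g' βhat (β - βhat) = ∑ i, (β i - βhat i) * g' βhat (Pi.single i 1) := by
    have h1 : (β - βhat) = ∑ i, (β i - βhat i) • (Pi.single i 1 : Fin p → ℝ) := by
      funext j
      simp [Finset.sum_apply, Pi.single_apply]
    rw [h1, map_sum]
    simp [smul_eq_mul]
  have hL : g' βhat (β - βhat) ≤ ∑ i ∈ Aᶜ, lam * |β i| := by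
    rw [hexp, ← Finset.sum_add_sum_compl A]
    have h0 : ∑ i ∈ A, (β i - βhat i) * g' βhat (Pi.single i 1) = 0 :=
      Finset.sum_eq_zero fun i hi => by rw [hgradA i hi, mul_zero]
    rw [h0, zero_add]
    refine Finset.sum_le_sum fun i hi => ?_
    rw [Finset.mem_compl] at hi
    rw [hzero i hi, sub_zero]
    calc β i * g' βhat (Pi.single i 1) ≤ |β i * g' βhat (Pi.single i 1)| := le_abs_self _
      _ = |β i| * |g' βhat (Pi.single i 1)| := abs_mul _ _
      _ ≤ |β i| * lam := mul_le_mul_of_nonneg_left (hgradAc i hi) (abs_nonneg _)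
      _ = lam * |β i| := mul_comm _ _
  have hsum1 : ∑ i, scadPenalty lam a |β i|
      = ∑ i ∈ A, scadPenalty lam a |βhat i| + ∑ i ∈ Aᶜ, lam * |β i| := by
    rw [← Finset.sum_add_sum_compl A]
    congr 1
    · refine Finset.sum_congr rfl fun i hi => ?_
      rw [scad_const ha hlam (hbigβ i hi), scad_const ha hlam (le_of_lt (hbig i hi))]
    · refine Finset.sum_congr rfl fun i hi => ?_
      rw [Finset.mem_compl] at hi
      exact scad_linear (abs_nonneg _) (le_of_lt ((habsAc i hi).trans_le hεlam))
  have hsum2 : ∑ i, scadPenalty lam a |βhat i| = ∑ i ∈ A, scadPenalty lam a |βhat i| := by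
    rw [← Finset.sum_add_sum_compl A]
    have : ∑ i ∈ Aᶜ, scadPenalty lam a |βhat i| = 0 := by
      refine Finset.sum_eq_zero fun i hi => ?_
      rw [Finset.mem_compl] at hi
      rw [hzero i hi, abs_zero]
      simp [scadPenalty]
    rw [this, add_zero]
  rw [hsum1, hsum2]
  linarith
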